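/- Let n ≥ 2 be an integer and let f : C(𝕋ⁿ,𝕋ⁿ) → 𝕋ⁿ be a range decreasing group homomorphism, i.e. a group homomorphism with f(x) ∈ x(𝕋ⁿ) for every continuous map x : 𝕋ⁿ → 𝕋ⁿ. Then there exists a point b ∈ 𝕋ⁿ such that f(x) = x(b) for every x ∈ C(𝕋ⁿ,𝕋ⁿ). -/

import Mathlib

open ContinuousMap

/-- For `n ≥ 2`, every range decreasing group homomorphism
`f : C(𝕋ⁿ,𝕋ⁿ) → 𝕋ⁿ` is an evaluation map: there is `b ∈ 𝕋ⁿ` with `f x = x b` for all `x`. -/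
theorem torus_rangeDecreasing_is_evaluation {n : ℕ} (hn : 2 ≤ n)
    (f : C(Fin n → Circle, Fin n → Circle) →* (Fin n → Circle))
    (hf : ∀ x : C(Fin n → Circle, Fin n → Circle), f x ∈ Set.range ⇑x) :
    ∃ b : Fin n → Circle, ∀ x : C(Fin n → Circle, Fin n → Circle), f x = x b := by
  classical
  haveI : NeZero n := ⟨by omega⟩
  -- combine a tuple of circle-valued maps into one torus-valued map
  let E : (Fin n → C(Fin n → Circle, Circle)) → C(Fin n → Circle, Fin n → Circle) :=
    fun u => ⟨fun v i => u i v, continuous_pi fun i => (u i).continuous⟩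
  have hEapp : ∀ u v i, E u v i = u i v := fun u v i => rfl
  -- coordinate projections
  let π : Fin n → C(Fin n → Circle, Circle) := fun k => ⟨fun v => v k, continuous_apply k⟩
  -- E is multiplicative
  have hEmul : ∀ u w, E (fun i => u i * w i) = E u * E w := by
    intro u w
    ext v
    simp [E]
  -- if the j-th component of u is 1, then the j-th component of f (E u) is 1
  have hE1 : ∀ (u : Fin n → C(Fin n → Circle, Circle)) (j : Fin n), u j = 1 →
      f (E u) j = 1 := by
    intro u j hj
    obtain ⟨v, hv⟩ := hf (E u)
    rw [← hv, hEapp, hj]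
    rfl
  -- the component homomorphisms
  let g : Fin n → C(Fin n → Circle, Circle) → Circle :=
    fun j z => f (E (fun i => if i = j then z else 1)) j
  -- main decomposition: the j-th component of f (E u) only depends on u j
  have hM : ∀ u (j : Fin n), f (E u) j = g j (u j) := by
    intro u j
    have hsplit : E u = E (fun i => if i = j then u j else 1) * E (fun i => if i = j then 1 else u i) := by
      rw [← hEmul]
      congr 1
      funext i
      by_cases h : i = j
      · subst h; simp
      · simp [h]
    rw [hsplit, map_mul, Pi.mul_apply]
    have h1 : f (E (fun i => if i = j then 1 else u i)) j = 1 := by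
      apply hE1
      simp
    rw [h1, mul_one]
  -- joint point property
  have hN : ∀ u : Fin n → C(Fin n → Circle, Circle), ∃ v, ∀ j : Fin n, g j (u j) = u j v := by
    intro u
    obtain ⟨v, hv⟩ := hf (E u)
    refine ⟨v, fun j => ?_⟩
    rw [← hM, ← hv, hEapp]
  -- all component homomorphisms agree
  have hgeq : ∀ (j : Fin n) z, g j z = g 0 z := by
    intro j z
    obtain ⟨v, hv⟩ := hN (fun _ => z)
    rw [hv j, hv 0]
  -- g 0 is multiplicative
  have hgmul : ∀ z w, g 0 (z * w) = g 0 z * g 0 w := by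
    intro z w
    show f (E _) 0 = f (E _) 0 * f (E _) 0
    have : (fun i : Fin n => if i = 0 then z * w else 1)
        = fun i => (if i = 0 then z else 1) * (if i = 0 then w else 1) := by
      funext i
      by_cases h : i = 0 <;> simp [h]
    rw [this, hEmul, map_mul, Pi.mul_apply]
  -- the candidate point
  set b : Fin n → Circle := fun k => g 0 (π k) with hb
  -- evaluation of composed maps: g 0 (z ∘ π k) = z (b k)
  have hB : ∀ (z : C(Circle, Circle)) (k : Fin n), g 0 (z.comp (π k)) = z (b k) := by
    intro z k
    have h10 : (⟨1, by omega⟩ : Fin n) ≠ 0 := by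
      simp [Fin.ext_iff]
    obtain ⟨v, hv⟩ := hN (fun i => if i = 0 then z.comp (π k) else π k)
    have h0 := hv 0
    have h1 := hv ⟨1, by omega⟩
    rw [if_pos rfl] at h0
    rw [if_neg h10, hgeq] at h1
    rw [h0]
    show z (v k) = z (b k)
    rw [hb]
    congr 1
    exact h1.symm
  -- main claim: g 0 is evaluation at b
  have hC : ∀ x : C(Fin n → Circle, Circle), g 0 x = x b := by
    intro x
    set last : Fin n := ⟨n - 1, by omega⟩ with hlast
    have hzc : Continuous fun s : Circle => (x (Function.update b last s))⁻¹ := by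
      apply Continuous.inv
      apply x.continuous.comp
      apply continuous_pi
      intro j
      by_cases h : j = last
      · subst h; simpa using continuous_id'
      · simpa [Function.update_apply, h] using continuous_const
    set z : C(Circle, Circle) := ⟨fun s => (x (Function.update b last s))⁻¹, hzc⟩ with hz
    set y : C(Fin n → Circle, Circle) := z.comp (π last) with hy
    have hgy : g 0 y = (x b)⁻¹ := by
      rw [hy, hB]
      show (x (Function.update b last (b last)))⁻¹ = (x b)⁻¹
      rw [Function.update_eq_self]
    obtain ⟨v, hv⟩ := hN (fun i : Fin n =>
      if h : i.val = 0 then x * y else π ⟨i.val - 1, by omega⟩)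
    -- the joint point agrees with b away from the last coordinate
    have hvj : ∀ j : Fin n, j ≠ last → v j = b j := by
      intro j hj
      have hjlt : j.val < n - 1 := by
        have := j.isLt
        have : j.val ≠ n - 1 := fun h => hj (Fin.ext h)
        omega
      have hi := hv ⟨j.val + 1, by omega⟩
      rw [dif_neg (by simp)] at hi
      have hj' : (⟨j.val + 1 - 1, by omega⟩ : Fin n) = j := Fin.ext (by simp)
      rw [hj', hgeq] at hi
      exact hi.symm
    have hupd : Function.update b last (v last) = v := by
      funext j
      by_cases h : j = last
      · subst h; simp
      · rw [Function.update_apply, if_neg h, hvj j h]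
    have h0 := hv 0
    rw [dif_pos (Fin.val_zero n)] at h0
    have hg0 : g 0 (x * y) = g 0 x * (x b)⁻¹ := by rw [hgmul, hgy]
    have hval : (x * y) v = 1 := by
      show x v * y v = 1
      have : y v = (x v)⁻¹ := by
        show (x (Function.update b last (v last)))⁻¹ = (x v)⁻¹
        rw [hupd]
      rw [this, mul_inv_cancel]
    rw [hg0, hval] at h0
    exact mul_inv_eq_one.mp h0
  -- assemble
  refine ⟨b, fun X => ?_⟩
  have hX : X = E (fun i => (π i).comp X) := by
    ext v
    rfl
  funext j
  calc f X j = f (E fun i => (π i).comp X) j := by rw [← hX]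
    _ = g j ((π j).comp X) := hM _ j
    _ = ((π j).comp X) b := by rw [hgeq, hC]
    _ = X b j := rfl
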